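/- Exact sparse recovery via ℓ1 minimization from a dual certificate: let R be a complex matrix with columns indexed by a finite set G, and let s be supported on S ⊆ G with the columns {R_g : g ∈ S} linearly independent. If there exists a vector q such that (R* q)_g = sign(s_g) for all g ∈ S and |(R* q)_g| < 1 for all g ∉ S, then s is the unique minimizer of: minimize ‖s'‖₁ subject to R s' = R s. -/

import Mathlib

open Complex Finset Matrix

/-- Exact sparse recovery via ℓ1 minimization from a dual certificate: if there is `q`
with `(R* q)_g = sign(s_g)` on the support of `s`, `|(R* q)_g| < 1` off the support, and
the columns of `R` on the support are linearly independent, then `s` is the unique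
minimizer of `minimize ‖s'‖₁ subject to R s' = R s`. -/
theorem l1_unique_minimizer_of_dual_certificate
    (m n : ℕ) (R : Matrix (Fin m) (Fin n) ℂ) (s : Fin n → ℂ)
    (hind : LinearIndependent ℂ (fun g : {g : Fin n // s g ≠ 0} => fun i => R i g))
    (q : Fin m → ℂ)
    (hsig : ∀ g, s g ≠ 0 → Rᴴ.mulVec q g = s g / (‖s g‖ : ℂ))
    (hb : ∀ g, s g = 0 → ‖Rᴴ.mulVec q g‖ < 1) :
    ∀ s' : Fin n → ℂ, R.mulVec s' = R.mulVec s → s' ≠ s →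
      ∑ g, ‖s g‖ < ∑ g, ‖s' g‖ := by
  intro s' heq hne
  set c := Rᴴ.mulVec q with hc
  have habs : ∀ g, ‖c g‖ ≤ 1 := by
    intro g
    by_cases h : s g = 0
    · exact (hb g h).le
    · rw [hsig g h]
      have hz : ‖s g‖ ≠ 0 := by simpa using h
      rw [norm_div, Complex.norm_real, norm_norm,
        div_self hz]
  have hid : ∀ t : Fin n → ℂ, ∑ g, (starRingEnd ℂ) (c g) * t g
      = ∑ i, (starRingEnd ℂ) (q i) * R.mulVec t i := by
    intro t
    simp only [hc, Matrix.mulVec, dotProduct, Matrix.conjTranspose_apply,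
      map_sum, _root_.map_mul, Complex.conj_conj, Finset.sum_mul, Finset.mul_sum, RCLike.star_def]
    rw [Finset.sum_comm]
    refine Finset.sum_congr rfl fun i _ => Finset.sum_congr rfl fun g _ => by ring
  have h1 : ∑ g, (starRingEnd ℂ) (c g) * s' g = ∑ g, (starRingEnd ℂ) (c g) * s g := by
    rw [hid, hid, heq]
  have h2 : ∑ g, (starRingEnd ℂ) (c g) * s g = ((∑ g, ‖s g‖ : ℝ) : ℂ) := by
    push_cast
    refine Finset.sum_congr rfl fun g _ => ?_
    by_cases h : s g = 0
    · simp [h]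
    · rw [hsig g h, map_div₀, Complex.conj_ofReal, div_mul_eq_mul_div,
        mul_comm, Complex.mul_conj, Complex.normSq_eq_norm_sq]
      have hz : (‖s g‖ : ℂ) ≠ 0 := by
        simpa using h
      field_simp
      push_cast
      ring
  -- existence of a coordinate off the support where s' is nonzero
  have hex : ∃ g, s g = 0 ∧ s' g ≠ 0 := by
    by_contra hall
    push_neg at hall
    apply hne
    set h : Fin n → ℂ := fun g => s' g - s g with hh
    have hker : R.mulVec h = 0 := by
      show R.mulVec (s' - s) = 0
      rw [Matrix.mulVec_sub, heq, sub_self]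
    have hzero : ∀ x : {g : Fin n // s g ≠ 0}, h x.val = 0 := by
      apply Fintype.linearIndependent_iff.mp hind (fun x => h x.val)
      funext i
      have hsum : ∑ x : {g : Fin n // s g ≠ 0}, h x.val * R i x.val
          = ∑ g, h g * R i g := by
        rw [← Finset.sum_subtype (Finset.univ.filter (fun g => s g ≠ 0))
          (by simp) (fun g => h g * R i g)]
        refine Finset.sum_filter_of_ne fun g _ hzero hs0 => ?_
        apply hzero
        have : h g = 0 := by simp [hh, hall g hs0, hs0]
        simp [this]
      have h0 : ∑ g, h g * R i g = 0 := by
        have := congrFun hker i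
        simpa [Matrix.mulVec, dotProduct, mul_comm] using this
      rw [Finset.sum_apply]
      simp only [Pi.smul_apply, smul_eq_mul, Pi.zero_apply]
      rw [hsum, h0]
    funext g
    by_cases hg : s g = 0
    · rw [hall g hg, hg]
    · have := hzero ⟨g, hg⟩
      simpa [hh, sub_eq_zero] using this
  obtain ⟨g₀, hg₀, hg₀'⟩ := hex
  have hre : ((∑ g, ‖s g‖ : ℝ) : ℂ).re = ∑ g, ‖s g‖ := by
    simp
  have hlt : (∑ g, (starRingEnd ℂ) (c g) * s' g).re < ∑ g, ‖s' g‖ := by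
    rw [Complex.re_sum]
    apply Finset.sum_lt_sum
    · intro g _
      calc ((starRingEnd ℂ) (c g) * s' g).re
          ≤ ‖(starRingEnd ℂ) (c g) * s' g‖ := Complex.re_le_norm _
        _ = ‖c g‖ * ‖s' g‖ := by simp [_root_.map_mul]
        _ ≤ 1 * ‖s' g‖ :=
            mul_le_mul_of_nonneg_right (habs g) (norm_nonneg _)
        _ = ‖s' g‖ := one_mul _
    · refine ⟨g₀, Finset.mem_univ _, ?_⟩
      calc ((starRingEnd ℂ) (c g₀) * s' g₀).re
          ≤ ‖(starRingEnd ℂ) (c g₀) * s' g₀‖ := Complex.re_le_norm _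
        _ = ‖c g₀‖ * ‖s' g₀‖ := by simp [_root_.map_mul]
        _ < 1 * ‖s' g₀‖ := by
            apply mul_lt_mul_of_pos_right (hb g₀ hg₀)
            simpa [norm_pos_iff] using hg₀'
        _ = ‖s' g₀‖ := one_mul _
  calc ∑ g, ‖s g‖
      = ((∑ g, ‖s g‖ : ℝ) : ℂ).re := hre.symm
    _ = (∑ g, (starRingEnd ℂ) (c g) * s' g).re := by rw [h1, h2]
    _ < ∑ g, ‖s' g‖ := hlt
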